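/- Suppose (a*, b*) ∈ (0,∞) × (0,∞) satisfies ∂J/∂a(a*,b*) = 0 and ∂J/∂b(a*,b*) = 0. Then the mixed second partial derivative vanishes there: ∂²J/∂a∂b(a*,b*) = ∂²J/∂b∂a(a*,b*) = 0. -/

import Mathlib

namespace St18

lemma hasDerivAt_exp_mul (r x : ℝ) :
    HasDerivAt (fun t => Real.exp (r * t)) (r * Real.exp (r * x)) x := by
  simpa [mul_comm] using ((hasDerivAt_id x).const_mul r).exp

noncomputable def E (Φ ρ b : ℝ) : ℝ := Φ * Real.exp (Φ * b) - ρ * Real.exp (ρ * b)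
noncomputable def E' (Φ ρ b : ℝ) : ℝ := Φ * (Φ * Real.exp (Φ * b)) - ρ * (ρ * Real.exp (ρ * b))

lemma hasDerivAt_E (Φ ρ b : ℝ) : HasDerivAt (fun t => E Φ ρ t) (E' Φ ρ b) b :=
  ((hasDerivAt_exp_mul Φ b).const_mul Φ).sub ((hasDerivAt_exp_mul ρ b).const_mul ρ)

lemma E_pos {Φ ρ : ℝ} (hΦ : 0 < Φ) (hρ : ρ < 0) (b : ℝ) : 0 < E Φ ρ b := by
  have h1 : 0 < Φ * Real.exp (Φ * b) := mul_pos hΦ (Real.exp_pos _)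
  have h2 : ρ * Real.exp (ρ * b) < 0 := mul_neg_of_neg_of_pos hρ (Real.exp_pos _)
  unfold E; linarith

noncomputable def gam (Φ ρ b : ℝ) : ℝ := (Φ - ρ) / E Φ ρ b
noncomputable def gam' (Φ ρ b : ℝ) : ℝ := (0 * E Φ ρ b - (Φ - ρ) * E' Φ ρ b) / E Φ ρ b ^ 2
noncomputable def th (Φ ρ b : ℝ) : ℝ := (Real.exp (Φ * b) - Real.exp (ρ * b)) / E Φ ρ b
noncomputable def th' (Φ ρ b : ℝ) : ℝ :=
  ((Φ * Real.exp (Φ * b) - ρ * Real.exp (ρ * b)) * E Φ ρ b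
    - (Real.exp (Φ * b) - Real.exp (ρ * b)) * E' Φ ρ b) / E Φ ρ b ^ 2

lemma hasDerivAt_gam {Φ ρ : ℝ} (hΦ : 0 < Φ) (hρ : ρ < 0) (b : ℝ) :
    HasDerivAt (fun t => gam Φ ρ t) (gam' Φ ρ b) b := by
  unfold gam gam'
  exact (hasDerivAt_const b (Φ - ρ)).div (hasDerivAt_E Φ ρ b) (E_pos hΦ hρ b).ne'

lemma hasDerivAt_th {Φ ρ : ℝ} (hΦ : 0 < Φ) (hρ : ρ < 0) (b : ℝ) :
    HasDerivAt (fun t => th Φ ρ t) (th' Φ ρ b) b := by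
  unfold th th'
  exact ((hasDerivAt_exp_mul Φ b).sub (hasDerivAt_exp_mul ρ b)).div
    (hasDerivAt_E Φ ρ b) (E_pos hΦ hρ b).ne'

lemma th_nonneg {Φ ρ : ℝ} (hΦ : 0 < Φ) (hρ : ρ < 0) {b : ℝ} (hb : 0 ≤ b) :
    0 ≤ th Φ ρ b := by
  unfold th
  apply div_nonneg _ (E_pos hΦ hρ b).le
  have h : ρ * b ≤ Φ * b := mul_le_mul_of_nonneg_right (by linarith) hb
  have := Real.exp_le_exp.mpr h
  linarith

noncomputable def mf (μα a : ℝ) : ℝ := (1 - Real.exp (-μα * a) * (μα * a + 1)) / μα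
noncomputable def mf' (μα a : ℝ) : ℝ := μα * a * Real.exp (-μα * a)

lemma hasDerivAt_mf {μα : ℝ} (hμα : μα ≠ 0) (a : ℝ) :
    HasDerivAt (fun t => mf μα t) (mf' μα a) a := by
  have h1 : HasDerivAt (fun t => Real.exp (-μα * t) * (μα * t + 1))
      ((-μα * Real.exp (-μα * a)) * (μα * a + 1) + Real.exp (-μα * a) * (μα * 1)) a :=
    (hasDerivAt_exp_mul (-μα) a).mul (((hasDerivAt_id a).const_mul μα).add_const 1)
  have h2 := ((hasDerivAt_const a (1 : ℝ)).sub h1).div_const μα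
  have h3 : (0 - ((-μα * Real.exp (-μα * a)) * (μα * a + 1) + Real.exp (-μα * a) * (μα * 1))) / μα
      = mf' μα a := by
    unfold mf'; field_simp; ring
  unfold mf
  rw [← h3]
  exact h2

noncomputable def Df (Φ ρ μα lam q a b : ℝ) : ℝ := q + μα * q * th Φ ρ b + lam * Real.exp (-μα * a)
noncomputable def Da (μα lam a : ℝ) : ℝ := lam * (-μα * Real.exp (-μα * a))
noncomputable def Db (Φ ρ μα q b : ℝ) : ℝ := μα * q * th' Φ ρ b
noncomputable def Nf (Φ ρ μα c lam k a b : ℝ) : ℝ := c * gam Φ ρ b - lam * k * mf μα a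
noncomputable def Na (μα lam k a : ℝ) : ℝ := -(lam * k * mf' μα a)
noncomputable def Nb (Φ ρ c b : ℝ) : ℝ := c * gam' Φ ρ b

lemma Df_pos {Φ ρ μα lam q : ℝ} (hΦ : 0 < Φ) (hρ : ρ < 0) (hμα : 0 < μα)
    (hlam : 0 < lam) (hq : 0 < q) (a : ℝ) {b : ℝ} (hb : 0 ≤ b) :
    0 < Df Φ ρ μα lam q a b := by
  have h1 : 0 ≤ μα * q * th Φ ρ b :=
    mul_nonneg (mul_nonneg hμα.le hq.le) (th_nonneg hΦ hρ hb)
  have h2 : 0 < lam * Real.exp (-μα * a) := mul_pos hlam (Real.exp_pos _)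
  unfold Df; linarith

lemma hasDerivAt_Df_a (Φ ρ μα lam q a b : ℝ) :
    HasDerivAt (fun t => Df Φ ρ μα lam q t b) (Da μα lam a) a := by
  unfold Df Da
  exact ((hasDerivAt_exp_mul (-μα) a).const_mul lam).const_add (q + μα * q * th Φ ρ b)

lemma hasDerivAt_Df_b {Φ ρ : ℝ} (hΦ : 0 < Φ) (hρ : ρ < 0) (μα lam q a b : ℝ) :
    HasDerivAt (fun t => Df Φ ρ μα lam q a t) (Db Φ ρ μα q b) b := by
  unfold Df Db
  exact (((hasDerivAt_th hΦ hρ b).const_mul (μα * q)).const_add q).add_const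
    (lam * Real.exp (-μα * a))

lemma hasDerivAt_Nf_a (Φ ρ : ℝ) {μα : ℝ} (c lam k : ℝ) (hμα : μα ≠ 0) (a b : ℝ) :
    HasDerivAt (fun t => Nf Φ ρ μα c lam k t b) (Na μα lam k a) a := by
  unfold Nf Na
  exact ((hasDerivAt_mf hμα a).const_mul (lam * k)).const_sub (c * gam Φ ρ b)

lemma hasDerivAt_Nf_b {Φ ρ : ℝ} (hΦ : 0 < Φ) (hρ : ρ < 0) (μα c lam k a b : ℝ) :
    HasDerivAt (fun t => Nf Φ ρ μα c lam k a t) (Nb Φ ρ c b) b := by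
  unfold Nf Nb
  exact ((hasDerivAt_gam hΦ hρ b).const_mul c).sub_const (lam * k * mf μα a)

end St18

open St18 in
theorem stmt18 (c α lam q μ k : ℝ)
    (hc : 0 < c) (hα0 : 0 < α) (hα1 : α ≤ 1)
    (hlam : 0 < lam) (hq : 0 < q) (hμ : 0 < μ) (hk : 1 ≤ k)
    (Δ Φ ρ : ℝ)
    (hΔ : Δ = (c*μ - α*lam - α*q)^2 + 4*α*c*μ*q)
    (hΦ : Φ = (-(c*μ - α*lam - α*q) + Real.sqrt Δ) / (2*α*c))
    (hρ : ρ = (-(c*μ - α*lam - α*q) - Real.sqrt Δ) / (2*α*c))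
    (hΦpos : 0 < Φ) (hρneg : ρ < 0)
    (γ θf m : ℝ → ℝ) (D J ψ : ℝ → ℝ → ℝ)
    (hγ : ∀ b, γ b = (Φ - ρ)/(Φ*Real.exp (Φ*b) - ρ*Real.exp (ρ*b)))
    (hθf : ∀ b, θf b = (Real.exp (Φ*b) - Real.exp (ρ*b))/(Φ*Real.exp (Φ*b) - ρ*Real.exp (ρ*b)))
    (hm : ∀ a, m a = (1 - Real.exp (-(μ/α)*a)*((μ/α)*a + 1))/(μ/α))
    (hD : ∀ a b, D a b = q + (μ/α)*q*θf b + lam*Real.exp (-(μ/α)*a))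
    (hJ : ∀ a b, J a b = (c*γ b - lam*k*m a)/(D a b))
    (hψ : ∀ a b, ψ a b = -(a*k*(q + q*(μ/α)*θf b)) + c*γ b + lam*k*(Real.exp (-(μ/α)*a) - 1)/(μ/α)) :
    ∀ astar bstar : ℝ, 0 < astar → 0 < bstar →
      deriv (fun a => J a bstar) astar = 0 →
      deriv (fun b => J astar b) bstar = 0 →
      deriv (fun b => deriv (fun a => J a b) astar) bstar = 0 ∧
      deriv (fun a => deriv (fun b => J a b) bstar) astar = 0 := by
  intro astar bstar hast hbst hJa0 hJb0
  set μα := μ / α with hμαdef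
  have hμα0 : 0 < μα := div_pos hμ hα0
  have hJfun : J = fun a b => Nf Φ ρ μα c lam k a b / Df Φ ρ μα lam q a b := by
    funext a b
    simp only [hJ, hD, hγ, hθf, hm, Nf, Df, gam, th, mf, E]
  simp only [hJfun] at hJa0 hJb0 ⊢
  have hD0 : Df Φ ρ μα lam q astar bstar ≠ 0 :=
    (Df_pos hΦpos hρneg hμα0 hlam hq astar hbst.le).ne'
  -- first-order conditions
  have e1 := ((hasDerivAt_Nf_a Φ ρ c lam k hμα0.ne' astar bstar).div
    (hasDerivAt_Df_a Φ ρ μα lam q astar bstar) hD0).deriv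
  erw [hJa0] at e1
  have eq1 : Na μα lam k astar * Df Φ ρ μα lam q astar bstar
      - Nf Φ ρ μα c lam k astar bstar * Da μα lam astar = 0 := by
    rcases div_eq_zero_iff.mp e1.symm with h | h
    · exact h
    · exact absurd h (pow_ne_zero 2 hD0)
  have e2 := ((hasDerivAt_Nf_b hΦpos hρneg μα c lam k astar bstar).div
    (hasDerivAt_Df_b hΦpos hρneg μα lam q astar bstar) hD0).deriv
  erw [hJb0] at e2
  have eq2 : Nb Φ ρ c bstar * Df Φ ρ μα lam q astar bstar
      - Nf Φ ρ μα c lam k astar bstar * Db Φ ρ μα q bstar = 0 := by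
    rcases div_eq_zero_iff.mp e2.symm with h | h
    · exact h
    · exact absurd h (pow_ne_zero 2 hD0)
  have hvne : Df Φ ρ μα lam q astar bstar ^ 2 ≠ 0 := pow_ne_zero 2 hD0
  constructor
  · -- d/db of (dJ/da at astar) at bstar
    have hev : (fun b => deriv (fun a => Nf Φ ρ μα c lam k a b / Df Φ ρ μα lam q a b) astar)
        =ᶠ[nhds bstar] (fun b => (Na μα lam k astar * Df Φ ρ μα lam q astar b
          - Nf Φ ρ μα c lam k astar b * Da μα lam astar) / Df Φ ρ μα lam q astar b ^ 2) := by
      filter_upwards [Ioi_mem_nhds hbst] with b hb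
      exact ((hasDerivAt_Nf_a Φ ρ c lam k hμα0.ne' astar b).div
        (hasDerivAt_Df_a Φ ρ μα lam q astar b)
        (Df_pos hΦpos hρneg hμα0 hlam hq astar (le_of_lt hb)).ne').deriv
    rw [hev.deriv_eq]
    have hu : HasDerivAt (fun b => Na μα lam k astar * Df Φ ρ μα lam q astar b
        - Nf Φ ρ μα c lam k astar b * Da μα lam astar)
        (Na μα lam k astar * Db Φ ρ μα q bstar - Nb Φ ρ c bstar * Da μα lam astar) bstar :=
      ((hasDerivAt_Df_b hΦpos hρneg μα lam q astar bstar).const_mul _).sub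
        ((hasDerivAt_Nf_b hΦpos hρneg μα c lam k astar bstar).mul_const _)
    have hv := (hasDerivAt_Df_b hΦpos hρneg μα lam q astar bstar).pow 2
    erw [(hu.div hv hvne).deriv]
    have key : (Na μα lam k astar * Db Φ ρ μα q bstar - Nb Φ ρ c bstar * Da μα lam astar)
        * Df Φ ρ μα lam q astar bstar = 0 := by
      linear_combination Db Φ ρ μα q bstar * eq1 - Da μα lam astar * eq2
    have hu'0 : Na μα lam k astar * Db Φ ρ μα q bstar
        - Nb Φ ρ c bstar * Da μα lam astar = 0 := by
      rcases mul_eq_zero.mp key with h | h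
      · exact h
      · exact absurd h hD0
    rw [hu'0, eq1]
    simp
  · -- d/da of (dJ/db at bstar) at astar
    have hfun : (fun a => deriv (fun b => Nf Φ ρ μα c lam k a b / Df Φ ρ μα lam q a b) bstar)
        = (fun a => (Nb Φ ρ c bstar * Df Φ ρ μα lam q a bstar
          - Nf Φ ρ μα c lam k a bstar * Db Φ ρ μα q bstar) / Df Φ ρ μα lam q a bstar ^ 2) := by
      funext a
      exact ((hasDerivAt_Nf_b hΦpos hρneg μα c lam k a bstar).div
        (hasDerivAt_Df_b hΦpos hρneg μα lam q a bstar)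
        (Df_pos hΦpos hρneg hμα0 hlam hq a hbst.le).ne').deriv
    rw [hfun]
    have hw : HasDerivAt (fun a => Nb Φ ρ c bstar * Df Φ ρ μα lam q a bstar
        - Nf Φ ρ μα c lam k a bstar * Db Φ ρ μα q bstar)
        (Nb Φ ρ c bstar * Da μα lam astar - Na μα lam k astar * Db Φ ρ μα q bstar) astar :=
      ((hasDerivAt_Df_a Φ ρ μα lam q astar bstar).const_mul _).sub
        ((hasDerivAt_Nf_a Φ ρ c lam k hμα0.ne' astar bstar).mul_const _)
    have hv2 := (hasDerivAt_Df_a Φ ρ μα lam q astar bstar).pow 2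
    erw [(hw.div hv2 hvne).deriv]
    have key2 : (Nb Φ ρ c bstar * Da μα lam astar - Na μα lam k astar * Db Φ ρ μα q bstar)
        * Df Φ ρ μα lam q astar bstar = 0 := by
      linear_combination Da μα lam astar * eq2 - Db Φ ρ μα q bstar * eq1
    have hw0 : Nb Φ ρ c bstar * Da μα lam astar
        - Na μα lam k astar * Db Φ ρ μα q bstar = 0 := by
      rcases mul_eq_zero.mp key2 with h | h
      · exact h
      · exact absurd h hD0
    rw [hw0, eq2]
    simp
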